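/- Let q be an odd prime. For no positive integer d and no primitive d-th root of unity ζ_d does u_q(ζ_d) = 0, where u_q(x) = Φ_q(x)² − q·x^{q−1} with Φ_q(x) = 1 + x + ⋯ + x^{q−1}. Equivalently, no cyclotomic polynomial Φ_d divides u_q. -/

import Mathlib

open Polynomial

theorem stmt13 (q : ℕ) (hq : q.Prime) (hodd : Odd q)
    (uq : Polynomial ℤ)
    (huq : uq = (∑ i ∈ Finset.range q, X ^ i) ^ 2 - C (q : ℤ) * X ^ (q - 1)) :
    (∀ d : ℕ, 0 < d → ∀ ζ : ℂ, IsPrimitiveRoot ζ d →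
      (uq.map (Int.castRingHom ℂ)).eval ζ ≠ 0) ∧
    (∀ d : ℕ, 0 < d → ¬ cyclotomic d ℤ ∣ uq) := by
  haveI : Fact q.Prime := ⟨hq⟩
  have hq2 : 2 ≤ q := hq.two_le
  have hqne2 : q ≠ 2 := by
    rintro rfl
    exact (Nat.not_odd_iff_even.mpr (by norm_num)) hodd
  have hq3 : 3 ≤ q := by omega
  have hS : (∑ i ∈ Finset.range q, (X : ℤ[X]) ^ i) = cyclotomic q ℤ :=
    (cyclotomic_prime ℤ q).symm
  have hSdeg : (cyclotomic q ℤ).natDegree = q - 1 := by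
    rw [natDegree_cyclotomic, Nat.totient_prime hq]
  have huq' : uq = cyclotomic q ℤ ^ 2 - C (q : ℤ) * X ^ (q - 1) := by rw [huq, hS]
  have hCXdeg : (C (q : ℤ) * X ^ (q - 1)).natDegree = q - 1 :=
    natDegree_C_mul_X_pow (q - 1) _ (by exact_mod_cast hq.ne_zero)
  have hS2deg : ((cyclotomic q ℤ) ^ 2).natDegree = 2 * (q - 1) := by
    rw [natDegree_pow, hSdeg]
  have hlt : (C (q : ℤ) * X ^ (q - 1)).natDegree < ((cyclotomic q ℤ) ^ 2).natDegree := by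
    rw [hCXdeg, hS2deg]; omega
  have huqdeg : uq.natDegree = 2 * (q - 1) := by
    rw [huq', natDegree_sub_eq_left_of_natDegree_lt hlt, hS2deg]
  have huqmonic : uq.Monic := by
    rw [huq']
    exact ((cyclotomic.monic q ℤ).pow 2).sub_of_left
      (degree_lt_degree hlt)
  have huqne : uq ≠ 0 := huqmonic.ne_zero
  -- main claim
  have key : ∀ d : ℕ, 0 < d → ¬ cyclotomic d ℤ ∣ uq := by
    intro d hd hdvd
    -- case d = 1
    rcases eq_or_lt_of_le (show 1 ≤ d from hd) with h1 | hd1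
    · rw [← h1, cyclotomic_one, ← C_1, dvd_iff_isRoot] at hdvd
      rw [IsRoot.def, huq'] at hdvd
      simp only [eval_sub, eval_mul, eval_pow, eval_C, eval_X, one_pow, mul_one] at hdvd
      rw [show eval 1 (cyclotomic q ℤ) = (q : ℤ) from eval_one_cyclotomic_prime] at hdvd
      have : (3 : ℤ) ≤ (q : ℤ) := by exact_mod_cast hq3
      nlinarith
    -- reduce mod q
    have hmap : uq.map (Int.castRingHom (ZMod q)) = ((X : (ZMod q)[X]) - 1) ^ (2 * (q - 1)) := by
      have hbar : ((X : (ZMod q)[X]) - 1) ^ (q - 1) = cyclotomic q (ZMod q) := by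
        have hXne : ((X : (ZMod q)[X]) - 1) ≠ 0 := by
          have := X_sub_C_ne_zero (R := ZMod q) (1 : ZMod q)
          simpa using this
        apply mul_right_cancel₀ hXne
        have h1 : ((X : (ZMod q)[X]) - 1) ^ (q - 1) * (X - 1) = (X - 1) ^ q := by
          rw [← pow_succ]; congr 1; omega
        have h2 : ((X : (ZMod q)[X]) - 1) ^ q = X ^ q - 1 := by
          have := sub_pow_char (p := q) (x := (X : (ZMod q)[X])) (y := 1)
          simpa using this
        rw [h1, h2, cyclotomic_prime, geom_sum_mul]
      rw [huq', Polynomial.map_sub, Polynomial.map_mul, Polynomial.map_pow,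
        Polynomial.map_pow, map_cyclotomic_int, map_C, map_X]
      rw [show (Int.castRingHom (ZMod q)) ((q : ℤ)) = 0 from by simp,
        C_0, zero_mul, sub_zero, ← hbar, ← pow_mul, mul_comm (q-1) 2]
    have hdvd2 : cyclotomic d (ZMod q) ∣ ((X : (ZMod q)[X]) - 1) ^ (2 * (q - 1)) := by
      rw [← hmap, ← map_cyclotomic_int d (ZMod q)]
      exact Polynomial.map_dvd _ hdvd
    have hXprime : Prime ((X : (ZMod q)[X]) - 1) := by
      have := prime_X_sub_C (R := ZMod q) (1 : ZMod q)
      simpa using this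
    obtain ⟨i, hile, hassoc⟩ := (dvd_prime_pow hXprime _).mp hdvd2
    -- i ≠ 0
    rcases Nat.eq_zero_or_pos i with rfl | hipos
    · rw [pow_zero] at hassoc
      have : IsUnit (cyclotomic d (ZMod q)) := associated_one_iff_isUnit.mp hassoc
      have h0 : (cyclotomic d (ZMod q)).natDegree = 0 := natDegree_eq_zero_of_isUnit this
      rw [natDegree_cyclotomic] at h0
      exact absurd h0 (Nat.totient_pos.mpr hd).ne'
    -- eval 1 (cyclotomic d (ZMod q)) = 0
    have heval : eval 1 (cyclotomic d (ZMod q)) = 0 := by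
      obtain ⟨u, hu⟩ := hassoc.symm
      rw [← hu, eval_mul, eval_pow]
      simp [zero_pow hipos.ne']
    -- d must be a prime power
    by_cases hpp : IsPrimePow d
    · obtain ⟨p, k, hp, hkpos, rfl⟩ := hpp
      have hp' : p.Prime := hp.nat_prime
      haveI : Fact p.Prime := ⟨hp'⟩
      obtain ⟨j, rfl⟩ : ∃ j, k = j + 1 := ⟨k - 1, by omega⟩
      rw [eval_one_cyclotomic_prime_pow] at heval
      have hqp : q = p := by
        have : q ∣ p := (ZMod.natCast_eq_zero_iff p q).mp heval
        exact ((Nat.prime_dvd_prime_iff_eq hq hp').mp this)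
      subst hqp
      rcases Nat.eq_zero_or_pos j with rfl | hjpos
      · -- d = q : cyclotomic q ∣ uq forces cyclotomic q ∣ C q * X^(q-1)
        rw [pow_one] at hdvd
        have hdvd3 : cyclotomic q ℤ ∣ C (q : ℤ) * X ^ (q - 1) := by
          have : C (q : ℤ) * X ^ (q - 1) = cyclotomic q ℤ ^ 2 - uq := by
            rw [huq']; ring
          rw [this]
          exact dvd_sub (dvd_pow_self _ two_ne_zero) hdvd
        obtain ⟨c, hc⟩ := hdvd3
        have hCXne : C (q : ℤ) * X ^ (q - 1) ≠ 0 := by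
          intro h
          have := natDegree_C_mul_X_pow (q - 1) ((q : ℤ)) (by exact_mod_cast hq.ne_zero)
          apply hq.ne_zero
          have : (C (q : ℤ) * X ^ (q - 1)).coeff (q - 1) = (q : ℤ) := by
            rw [coeff_C_mul, coeff_X_pow, if_pos rfl, mul_one]
          rw [h, coeff_zero] at this
          exact_mod_cast this.symm
        have hcne : c ≠ 0 := by rintro rfl; rw [mul_zero] at hc; exact hCXne hc
        have hcdeg : c.natDegree = 0 := by
          have := congrArg natDegree hc
          rw [hCXdeg, natDegree_mul (cyclotomic_ne_zero q ℤ) hcne, hSdeg] at this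
          omega
        have hc0 : eval 0 c = 0 := by
          have := congrArg (eval 0) hc
          have hS0 : eval 0 (cyclotomic q ℤ) = 1 := by
            rw [← coeff_zero_eq_eval_zero]
            exact cyclotomic_coeff_zero ℤ (by omega)
          simp only [eval_mul, eval_C, eval_pow, eval_X, hS0, one_mul,
            zero_pow (by omega : q - 1 ≠ 0), mul_zero] at this
          exact this.symm
        have : c = 0 := by
          rw [eq_C_of_natDegree_eq_zero hcdeg, coeff_zero_eq_eval_zero, hc0, C_0]
        exact hcne this
      · -- d = q^(j+1), j ≥ 1 : degree too big
        have hdeg : (cyclotomic (q ^ (j + 1)) ℤ).natDegree ≤ uq.natDegree :=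
          natDegree_le_of_dvd hdvd huqne
        rw [natDegree_cyclotomic, huqdeg, Nat.totient_prime_pow hq (by omega)] at hdeg
        have hqj : q ≤ q ^ j := Nat.le_self_pow hjpos.ne' q
        have : q ^ j * (q - 1) ≤ 2 * (q - 1) := by
          calc q ^ j * (q - 1) = q ^ (j + 1 - 1) * (q - 1) := by norm_num
          _ ≤ 2 * (q - 1) := hdeg
        nlinarith
    · -- not a prime power : eval 1 = 1 ≠ 0
      have h1 : ∀ {p : ℕ}, p.Prime → ∀ k : ℕ, p ^ k ≠ d := by
        intro p hp k hk
        rcases Nat.eq_zero_or_pos k with rfl | hkpos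
        · rw [pow_zero] at hk; omega
        · exact hpp ⟨p, k, hp.prime, hkpos, hk⟩
      rw [eval_one_cyclotomic_not_prime_pow h1] at heval
      exact one_ne_zero heval
  refine ⟨?_, key⟩
  intro d hd ζ hζ hev
  apply key d hd
  have haev : (Polynomial.aeval ζ) (uq.map (Int.castRingHom ℚ)) = 0 := by
    rw [aeval_def, eval₂_eq_eval_map, Polynomial.map_map]
    rw [show ((algebraMap ℚ ℂ).comp (Int.castRingHom ℚ) : ℤ →+* ℂ) = Int.castRingHom ℂ from by
      ext n; simp]
    exact hev
  have hmin : minpoly ℚ ζ ∣ uq.map (Int.castRingHom ℚ) := minpoly.dvd ℚ ζ haev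
  rw [← cyclotomic_eq_minpoly_rat hζ hd] at hmin
  rw [← map_dvd_map (Int.castRingHom ℚ) Int.cast_injective (cyclotomic.monic d ℤ),
    map_cyclotomic_int]
  exact hmin
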